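/- If g_m/N_m ≤ h_mb/(N_b + g_b·P_b) for a fixed P_b ≥ 0, then the function P_m ↦ r(P_m, P_b) is strictly concave and strictly increasing on [0, ∞). Symmetrically, if g_b/N_b ≤ h_bm/(N_m + g_m·P_m) for a fixed P_m ≥ 0, then the function P_b ↦ r(P_m, P_b) is strictly concave and strictly increasing on [0, ∞). -/

import Mathlib

private lemma hasDerivAt_logaff (p q x : ℝ) (h : q + p * x ≠ 0) :
    HasDerivAt (fun y => Real.log (q + p * y)) (p / (q + p * x)) x := by
  have h1 : HasDerivAt (fun y : ℝ => q + p * y) p x := by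
    simpa using ((hasDerivAt_id x).const_mul p).const_add q
  have h2 := (Real.hasDerivAt_log h).comp x h1
  rw [div_eq_inv_mul]; exact h2

private lemma hasDerivAt_divaff (p q x : ℝ) (h : q + p * x ≠ 0) :
    HasDerivAt (fun y => p / (q + p * y)) (-(p / (q + p * x)) ^ 2) x := by
  have h1 : HasDerivAt (fun y : ℝ => q + p * y) p x := by
    simpa using ((hasDerivAt_id x).const_mul p).const_add q
  have h3 := (h1.inv h).const_mul p
  have e : (fun y => p / (q + p * y)) = fun y => p * (fun y => q + p * y)⁻¹ y := by
    funext y; simp [div_eq_mul_inv]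
  have v : -(p / (q + p * x)) ^ 2 = p * (-p / (q + p * x) ^ 2) := by rw [div_pow]; ring
  rw [e, v]; exact h3

private lemma master (a b c d e : ℝ) (ha : 0 < a) (hb : 0 < b) (hc : 0 < c)
    (hd : 0 < d) (hde : d ≤ e) (hcond : c * b ≤ a * d) :
    StrictConcaveOn ℝ (Set.Ici 0)
      (fun x => (Real.log (b + a * x) + Real.log (e + c * x) - Real.log (d + c * x)
        - Real.log b) / Real.log 2) ∧
    StrictMonoOn
      (fun x => (Real.log (b + a * x) + Real.log (e + c * x) - Real.log (d + c * x)
        - Real.log b) / Real.log 2) (Set.Ici 0) := by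
  have he : 0 < e := hd.trans_le hde
  set G : ℝ → ℝ := fun x => (Real.log (b + a * x) + Real.log (e + c * x)
    - Real.log (d + c * x) - Real.log b) / Real.log 2 with hGdef
  set G' : ℝ → ℝ := fun x =>
    (a / (b + a * x) + c / (e + c * x) - c / (d + c * x)) / Real.log 2 with hG'def
  have hbx : ∀ x : ℝ, 0 ≤ x → 0 < b + a * x := fun x hx =>
    add_pos_of_pos_of_nonneg hb (mul_nonneg ha.le hx)
  have hex : ∀ x : ℝ, 0 ≤ x → 0 < e + c * x := fun x hx =>
    add_pos_of_pos_of_nonneg he (mul_nonneg hc.le hx)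
  have hdx : ∀ x : ℝ, 0 ≤ x → 0 < d + c * x := fun x hx =>
    add_pos_of_pos_of_nonneg hd (mul_nonneg hc.le hx)
  have hG : ∀ x : ℝ, 0 ≤ x → HasDerivAt G (G' x) x := fun x hx =>
    ((((hasDerivAt_logaff a b x (hbx x hx).ne').add
      (hasDerivAt_logaff c e x (hex x hx).ne')).sub
      (hasDerivAt_logaff c d x (hdx x hx).ne')).sub_const (Real.log b)).div_const _
  have hG' : ∀ x : ℝ, 0 ≤ x → HasDerivAt G'
      ((-(a / (b + a * x)) ^ 2 + -(c / (e + c * x)) ^ 2 - -(c / (d + c * x)) ^ 2)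
        / Real.log 2) x := fun x hx =>
    (((hasDerivAt_divaff a b x (hbx x hx).ne').add
      (hasDerivAt_divaff c e x (hex x hx).ne')).sub
      (hasDerivAt_divaff c d x (hdx x hx).ne')).div_const _
  have hcont : ContinuousOn G (Set.Ici 0) := fun x hx =>
    (hG x hx).continuousAt.continuousWithinAt
  have key : ∀ x : ℝ, 0 ≤ x → c / (d + c * x) ≤ a / (b + a * x) := by
    intro x hx
    rw [div_le_div_iff₀ (hdx x hx) (hbx x hx)]
    nlinarith [mul_nonneg (mul_nonneg ha.le hc.le) hx]
  have l2 : 0 < Real.log 2 := Real.log_pos (by norm_num)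
  constructor
  · apply strictConcaveOn_of_deriv2_neg (convex_Ici 0) hcont
    intro x hx
    rw [interior_Ici] at hx
    have hev : deriv G =ᶠ[nhds x] G' := by
      filter_upwards [isOpen_Ioi.mem_nhds hx] with y hy using (hG y hy.le).deriv
    have : deriv^[2] G x = deriv (deriv G) x := rfl
    rw [this, hev.deriv_eq, (hG' x hx.le).deriv]
    apply div_neg_of_neg_of_pos _ l2
    have k1 : (c / (d + c * x)) ^ 2 ≤ (a / (b + a * x)) ^ 2 := by
      exact pow_le_pow_left₀ (div_nonneg hc.le (hdx x hx.le).le) (key x hx.le) 2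
    have k2 : 0 < (c / (e + c * x)) ^ 2 := pow_pos (div_pos hc (hex x hx.le)) 2
    linarith
  · apply strictMonoOn_of_deriv_pos (convex_Ici 0) hcont
    intro x hx
    rw [interior_Ici] at hx
    rw [(hG x hx.le).deriv]
    apply div_pos _ l2
    have k1 := key x hx.le
    have k2 : 0 < c / (e + c * x) := div_pos hc (hex x hx.le)
    linarith

private lemma transfer {f g : ℝ → ℝ} (h : Set.EqOn f g (Set.Ici 0))
    (hg : StrictConcaveOn ℝ (Set.Ici 0) g ∧ StrictMonoOn g (Set.Ici 0)) :
    StrictConcaveOn ℝ (Set.Ici 0) f ∧ StrictMonoOn f (Set.Ici 0) := by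
  constructor
  · refine ⟨hg.1.1, fun x hx y hy hxy p q hp hq hpq => ?_⟩
    have hm : p • x + q • y ∈ Set.Ici (0 : ℝ) := hg.1.1 hx hy hp.le hq.le hpq
    rw [h hx, h hy, h hm]
    exact hg.1.2 hx hy hxy hp hq hpq
  · intro x hx y hy hxy
    rw [h hx, h hy]
    exact hg.2 hx hy hxy

/-- Sufficient conditions for the full-duplex sum rate to be strictly concave
and strictly increasing in each transmission power separately. -/
theorem stmt_4 (hmb hbm gb gm Nb Nm : ℝ)
    (hhmb : 0 < hmb) (hhbm : 0 < hbm) (hgb : 0 < gb) (hgm : 0 < gm)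
    (hNb : 0 < Nb) (hNm : 0 < Nm)
    (r : ℝ → ℝ → ℝ)
    (hr : ∀ Pm Pb, r Pm Pb =
      Real.logb 2 (1 + hmb * Pm / (Nb + gb * Pb)) +
      Real.logb 2 (1 + hbm * Pb / (Nm + gm * Pm))) :
    (∀ Pb : ℝ, 0 ≤ Pb → gm / Nm ≤ hmb / (Nb + gb * Pb) →
      StrictConcaveOn ℝ (Set.Ici 0) (fun pm => r pm Pb) ∧
      StrictMonoOn (fun pm => r pm Pb) (Set.Ici 0)) ∧
    (∀ Pm : ℝ, 0 ≤ Pm → gb / Nb ≤ hbm / (Nm + gm * Pm) →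
      StrictConcaveOn ℝ (Set.Ici 0) (fun pb => r Pm pb) ∧
      StrictMonoOn (fun pb => r Pm pb) (Set.Ici 0)) := by
  constructor
  · intro Pb hPb hcond
    have hb : 0 < Nb + gb * Pb := add_pos_of_pos_of_nonneg hNb (mul_nonneg hgb.le hPb)
    have hcond' : gm * (Nb + gb * Pb) ≤ hmb * Nm := by
      rw [div_le_div_iff₀ hNm hb] at hcond
      linarith
    apply transfer (g := fun x => (Real.log ((Nb + gb * Pb) + hmb * x)
      + Real.log ((Nm + hbm * Pb) + gm * x) - Real.log (Nm + gm * x)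
      - Real.log (Nb + gb * Pb)) / Real.log 2)
    · intro x hx
      simp only [Set.mem_Ici] at hx
      have h1 : 0 < (Nb + gb * Pb) + hmb * x :=
        add_pos_of_pos_of_nonneg hb (mul_nonneg hhmb.le hx)
      have h2 : 0 < Nm + gm * x := add_pos_of_pos_of_nonneg hNm (mul_nonneg hgm.le hx)
      have h3 : 0 < (Nm + hbm * Pb) + gm * x := by nlinarith
      have e1 : (1 + hmb * x / (Nb + gb * Pb))
          = ((Nb + gb * Pb) + hmb * x) / (Nb + gb * Pb) := by field_simp
      have e2 : (1 + hbm * Pb / (Nm + gm * x))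
          = ((Nm + hbm * Pb) + gm * x) / (Nm + gm * x) := by field_simp; ring
      simp only [hr, e1, e2, Real.logb, Real.log_div h1.ne' hb.ne',
        Real.log_div h3.ne' h2.ne']
      ring
    · exact master hmb (Nb + gb * Pb) gm Nm (Nm + hbm * Pb) hhmb hb hgm hNm
        (by nlinarith) hcond'
  · intro Pm hPm hcond
    have hb : 0 < Nm + gm * Pm := add_pos_of_pos_of_nonneg hNm (mul_nonneg hgm.le hPm)
    have hcond' : gb * (Nm + gm * Pm) ≤ hbm * Nb := by
      rw [div_le_div_iff₀ hNb hb] at hcond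
      linarith
    apply transfer (g := fun x => (Real.log ((Nm + gm * Pm) + hbm * x)
      + Real.log ((Nb + hmb * Pm) + gb * x) - Real.log (Nb + gb * x)
      - Real.log (Nm + gm * Pm)) / Real.log 2)
    · intro x hx
      simp only [Set.mem_Ici] at hx
      have h1 : 0 < (Nm + gm * Pm) + hbm * x :=
        add_pos_of_pos_of_nonneg hb (mul_nonneg hhbm.le hx)
      have h2 : 0 < Nb + gb * x := add_pos_of_pos_of_nonneg hNb (mul_nonneg hgb.le hx)
      have h3 : 0 < (Nb + hmb * Pm) + gb * x := by nlinarith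
      have e1 : (1 + hbm * x / (Nm + gm * Pm))
          = ((Nm + gm * Pm) + hbm * x) / (Nm + gm * Pm) := by field_simp
      have e2 : (1 + hmb * Pm / (Nb + gb * x))
          = ((Nb + hmb * Pm) + gb * x) / (Nb + gb * x) := by field_simp; ring
      simp only [hr, e1, e2, Real.logb, Real.log_div h1.ne' hb.ne',
        Real.log_div h3.ne' h2.ne']
      ring
    · exact master hbm (Nm + gm * Pm) gb Nb (Nb + hmb * Pm) hhbm hb hgb hNb
        (by nlinarith) hcond'
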